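/- Let J ∈ ℝ and γ ≥ 0, and let ρ : ℝ → Matrix (Fin 4) (Fin 4) ℂ be defined by ρ(t)₀₀ = 1 - e^{-γt}, ρ(t)₁₁ = (e^{-γt}/2)(1 - cos 2Jt), ρ(t)₁₂ = -(i e^{-γt}/2) sin 2Jt, ρ(t)₂₁ = (i e^{-γt}/2) sin 2Jt, ρ(t)₂₂ = (e^{-γt}/2)(1 + cos 2Jt), and all other entries zero. Then for every t ≥ 0, ρ(t) is positive semidefinite and trace(ρ(t)) = 1; i.e., ρ(t) is a valid density matrix for all t ≥ 0. -/
import Mathlib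

open Matrix
open scoped ComplexOrder

lemma aux_fact (a b c : ℝ) :
    (!![((a:ℝ):ℂ), 0, 0, 0; 0, ((b:ℝ):ℂ), -(Complex.I * ((c:ℝ):ℂ)), 0] :
      Matrix (Fin 2) (Fin 4) ℂ)ᴴ *
    !![((a:ℝ):ℂ), 0, 0, 0; 0, ((b:ℝ):ℂ), -(Complex.I * ((c:ℝ):ℂ)), 0] =
    !![((a*a : ℝ):ℂ), 0, 0, 0;
       0, ((b*b : ℝ):ℂ), -(Complex.I * ((b*c : ℝ):ℂ)), 0;
       0, Complex.I * ((b*c : ℝ):ℂ), ((c*c : ℝ):ℂ), 0;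
       0, 0, 0, 0] := by
  ext i j
  fin_cases i <;> fin_cases j <;>
    simp [Matrix.mul_apply, Fin.sum_univ_two, Matrix.conjTranspose_apply,
      Complex.ext_iff, Matrix.vecHead, Matrix.vecTail] <;>
    ring

theorem two_qubit_solution_is_density_matrix (J γ : ℝ) (hγ : 0 ≤ γ)
    (ρ : ℝ → Matrix (Fin 4) (Fin 4) ℂ)
    (hρ : ρ = fun t =>
      !![((1 - Real.exp (-(γ*t)) : ℝ) : ℂ), 0, 0, 0;
         0, ((Real.exp (-(γ*t)) / 2 * (1 - Real.cos (2*J*t)) : ℝ) : ℂ),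
            -(Complex.I * ((Real.exp (-(γ*t)) / 2 * Real.sin (2*J*t) : ℝ) : ℂ)), 0;
         0, Complex.I * ((Real.exp (-(γ*t)) / 2 * Real.sin (2*J*t) : ℝ) : ℂ),
            ((Real.exp (-(γ*t)) / 2 * (1 + Real.cos (2*J*t)) : ℝ) : ℂ), 0;
         0, 0, 0, 0]) :
    ∀ t : ℝ, 0 ≤ t → (ρ t).PosSemidef ∧ Matrix.trace (ρ t) = 1 := by
  intro t ht
  set e : ℝ := Real.exp (-(γ*t)) with he
  have he0 : 0 ≤ e := (Real.exp_pos _).le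
  have he1 : e ≤ 1 := by
    rw [he, Real.exp_le_one_iff]
    nlinarith [mul_nonneg hγ ht]
  have h1e : 0 ≤ 1 - e := by linarith
  have hse : Real.sqrt e * Real.sqrt e = e := Real.mul_self_sqrt he0
  have hs1e : Real.sqrt (1-e) * Real.sqrt (1-e) = 1 - e := Real.mul_self_sqrt h1e
  have hc2 : Real.cos (2*J*t) = 2 * Real.cos (J*t)^2 - 1 := by
    rw [show (2*J*t) = 2*(J*t) by ring, Real.cos_two_mul]
  have hs2 : Real.sin (2*J*t) = 2 * Real.sin (J*t) * Real.cos (J*t) := by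
    rw [show (2*J*t) = 2*(J*t) by ring, Real.sin_two_mul]
  have hpy : Real.sin (J*t)^2 + Real.cos (J*t)^2 = 1 := Real.sin_sq_add_cos_sq _
  set a : ℝ := Real.sqrt (1-e)
  set b : ℝ := Real.sqrt e * Real.sin (J*t) with hb
  set c : ℝ := Real.sqrt e * Real.cos (J*t) with hc
  have h1 : a * a = 1 - e := hs1e
  have h2 : b * b = e / 2 * (1 - Real.cos (2*J*t)) := by
    rw [hb, hc2]; nlinarith [hse, hpy, sq_nonneg (Real.sin (J*t))]
  have h3 : b * c = e / 2 * Real.sin (2*J*t) := by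
    rw [hb, hc, hs2]; linear_combination (Real.sin (J*t) * Real.cos (J*t)) * hse
  have h4 : c * c = e / 2 * (1 + Real.cos (2*J*t)) := by
    rw [hc, hc2]; nlinarith [hse]
  have key : ρ t =
      (!![((a:ℝ):ℂ), 0, 0, 0; 0, ((b:ℝ):ℂ), -(Complex.I * ((c:ℝ):ℂ)), 0] :
        Matrix (Fin 2) (Fin 4) ℂ)ᴴ *
      !![((a:ℝ):ℂ), 0, 0, 0; 0, ((b:ℝ):ℂ), -(Complex.I * ((c:ℝ):ℂ)), 0] := by
    rw [aux_fact, h1, h2, h3, h4, hρ]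
  refine ⟨?_, ?_⟩
  · rw [key]; exact Matrix.posSemidef_conjTranspose_mul_self _
  · rw [hρ]
    simp [Matrix.trace, Fin.sum_univ_four, Matrix.diag, Matrix.vecHead, Matrix.vecTail]
    push_cast
    ring
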